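/- The function x ↦ B(x) − (1/2)·|x₃|·e^{−π(x₂²−x₃²)} is twice continuously differentiable (C²) on all of ℝ². (Paper Lemma 5.5(i).) -/

import Mathlib

open MeasureTheory

/-- The upper incomplete gamma function `Γ(1/2, a) = ∫_a^∞ e^{-u} u^{-1/2} du`. -/
noncomputable def Ginc (a : ℝ) : ℝ := ∫ u in Set.Ioi a, Real.exp (-u) * u ^ (-(1:ℝ)/2)

/-- The `e₃`-component `B` of the singular Schwartz function `ψ̃₀,₁`. -/
noncomputable def B (x : ℝ × ℝ) : ℝ :=
  -(1 / (2 * Real.sqrt 2 * Real.pi)) * Real.exp (-(Real.pi * (x.1 ^ 2 + x.2 ^ 2)))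
  + (1 / (2 * Real.sqrt Real.pi)) * |x.2| * Ginc (2 * Real.pi * x.2 ^ 2) *
      Real.exp (-(Real.pi * (x.1 ^ 2 - x.2 ^ 2)))

lemma ginc_sq (c : ℝ) (hc : 0 ≤ c) :
    Ginc (c ^ 2) = 2 * ∫ v in Set.Ioi c, Real.exp (-v ^ 2) := by
  have himg : (fun v : ℝ => v ^ 2) '' Set.Ioi c = Set.Ioi (c ^ 2) := by
    ext u
    constructor
    · rintro ⟨v, hv, rfl⟩
      have hv' : c < v := hv
      exact Set.mem_Ioi.mpr (by show c ^ 2 < v ^ 2; nlinarith)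
    · intro hu
      have hu2 : c ^ 2 < u := hu
      have hu' : (0:ℝ) ≤ u := le_trans (by positivity) hu2.le
      exact ⟨Real.sqrt u, Set.mem_Ioi.mpr ((Real.lt_sqrt hc).mpr hu2), Real.sq_sqrt hu'⟩
  have hderiv : ∀ v ∈ Set.Ioi c, HasDerivWithinAt (fun v : ℝ => v ^ 2) (2 * v) (Set.Ioi c) v := by
    intro v _
    simpa [mul_comm] using ((hasDerivAt_pow 2 v).hasDerivWithinAt)
  have hinj : Set.InjOn (fun v : ℝ => v ^ 2) (Set.Ioi c) := by
    intro x hx y hy h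
    have h' : x ^ 2 = y ^ 2 := h
    have hx' : 0 < x := lt_of_le_of_lt hc (Set.mem_Ioi.mp hx)
    have hy' : 0 < y := lt_of_le_of_lt hc (Set.mem_Ioi.mp hy)
    nlinarith
  have key := integral_image_eq_integral_abs_deriv_smul measurableSet_Ioi hderiv hinj
    (fun u => Real.exp (-u) * u ^ (-(1:ℝ)/2))
  rw [himg] at key
  rw [Ginc, key]
  rw [show (2:ℝ) * ∫ v in Set.Ioi c, Real.exp (-v ^ 2)
      = ∫ v in Set.Ioi c, 2 * Real.exp (-v ^ 2) from
    (MeasureTheory.integral_const_mul 2 _).symm]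
  apply MeasureTheory.setIntegral_congr_fun measurableSet_Ioi
  intro x hx
  have hx' : 0 < x := lt_of_le_of_lt hc (Set.mem_Ioi.mp hx)
  have hpow : ((x:ℝ) ^ 2) ^ (-(1:ℝ)/2) = x⁻¹ := by
    rw [← Real.rpow_natCast x 2, ← Real.rpow_mul hx'.le]
    norm_num
    exact (Real.rpow_neg_one x)
  simp only [smul_eq_mul, hpow]
  rw [abs_of_pos (by positivity : (0:ℝ) < 2 * x)]
  field_simp

lemma gaussian_int_odd (a : ℝ) :
    ∫ v in (0:ℝ)..(-a), Real.exp (-(2 * Real.pi * v ^ 2))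
      = - ∫ v in (0:ℝ)..a, Real.exp (-(2 * Real.pi * v ^ 2)) := by
  have h := intervalIntegral.integral_comp_neg
    (fun v : ℝ => Real.exp (-(2 * Real.pi * v ^ 2))) (a := a) (b := 0)
  rw [neg_zero] at h
  rw [← h]
  have h2 : ∫ x in a..(0:ℝ), Real.exp (-(2 * Real.pi * (-x) ^ 2))
      = ∫ x in a..(0:ℝ), Real.exp (-(2 * Real.pi * x ^ 2)) := by
    apply intervalIntegral.integral_congr
    intro x _
    simp [neg_sq]
  rw [h2, intervalIntegral.integral_symm]

lemma ginc_formula (t : ℝ) :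
    Ginc (2 * Real.pi * t ^ 2) = Real.sqrt Real.pi
      - 2 * Real.sqrt (2 * Real.pi) * ∫ w in (0:ℝ)..|t|, Real.exp (-(2 * Real.pi * w ^ 2)) := by
  set c : ℝ := Real.sqrt (2 * Real.pi) * |t| with hc
  have hc0 : 0 ≤ c := by positivity
  have hcsq : c ^ 2 = 2 * Real.pi * t ^ 2 := by
    rw [hc, mul_pow, Real.sq_sqrt (by positivity), sq_abs]
  have h1 : Ginc (2 * Real.pi * t ^ 2) = 2 * ∫ v in Set.Ioi c, Real.exp (-v ^ 2) := by
    rw [← hcsq]; exact ginc_sq c hc0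
  have hint : Integrable (fun v : ℝ => Real.exp (-v ^ 2)) := by
    simpa using integrable_exp_neg_mul_sq (b := 1) one_pos
  have hsplit : (∫ v in Set.Ioi (0:ℝ), Real.exp (-v ^ 2))
      = (∫ v in Set.Ioc (0:ℝ) c, Real.exp (-v ^ 2)) + ∫ v in Set.Ioi c, Real.exp (-v ^ 2) := by
    rw [← MeasureTheory.setIntegral_union (Set.Ioc_disjoint_Ioi le_rfl) measurableSet_Ioi
      hint.integrableOn hint.integrableOn, Set.Ioc_union_Ioi_eq_Ioi hc0]
  have hgauss : (∫ v in Set.Ioi (0:ℝ), Real.exp (-v ^ 2)) = Real.sqrt Real.pi / 2 := by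
    have := integral_gaussian_Ioi 1
    simpa using this
  have hne : Real.sqrt (2 * Real.pi) ≠ 0 := by positivity
  have hsubst : (∫ v in Set.Ioc (0:ℝ) c, Real.exp (-v ^ 2))
      = Real.sqrt (2 * Real.pi) * ∫ w in (0:ℝ)..|t|, Real.exp (-(2 * Real.pi * w ^ 2)) := by
    have h := intervalIntegral.integral_comp_mul_left
      (f := fun v : ℝ => Real.exp (-v ^ 2)) (a := 0) (b := |t|) hne
    simp only [mul_zero, smul_eq_mul] at h
    have h2 : (∫ x in (0:ℝ)..|t|, Real.exp (-(Real.sqrt (2 * Real.pi) * x) ^ 2))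
        = ∫ w in (0:ℝ)..|t|, Real.exp (-(2 * Real.pi * w ^ 2)) := by
      apply intervalIntegral.integral_congr
      intro x _
      show Real.exp (-(Real.sqrt (2 * Real.pi) * x) ^ 2) = Real.exp (-(2 * Real.pi * x ^ 2))
      rw [mul_pow, Real.sq_sqrt (by positivity : (0:ℝ) ≤ 2 * Real.pi)]
    rw [h2] at h
    rw [← intervalIntegral.integral_of_le hc0, hc, h, ← mul_assoc,
      mul_inv_cancel₀ hne, one_mul]
  rw [h1]
  have h3 := hsplit
  rw [hgauss, hsubst] at h3
  linarith

lemma key_identity (t : ℝ) :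
    1 / (2 * Real.sqrt Real.pi) * |t| * Ginc (2 * Real.pi * t ^ 2) - 1 / 2 * |t|
      = -(Real.sqrt 2 * t * ∫ v in (0:ℝ)..t, Real.exp (-(2 * Real.pi * v ^ 2))) := by
  rw [ginc_formula]
  have hpi : (0:ℝ) < Real.sqrt Real.pi := Real.sqrt_pos.mpr Real.pi_pos
  have hA : Real.sqrt Real.pi ≠ 0 := ne_of_gt hpi
  have hs2 : Real.sqrt (2 * Real.pi) = Real.sqrt 2 * Real.sqrt Real.pi :=
    Real.sqrt_mul (by norm_num) _
  have habs : |t| * (∫ w in (0:ℝ)..|t|, Real.exp (-(2 * Real.pi * w ^ 2)))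
      = t * ∫ v in (0:ℝ)..t, Real.exp (-(2 * Real.pi * v ^ 2)) := by
    rcases le_or_gt 0 t with h | h
    · rw [abs_of_nonneg h]
    · rw [abs_of_neg h, gaussian_int_odd]; ring
  have helper : ∀ A B u I1 I2 : ℝ, A ≠ 0 → u * I1 = I2 →
      1/(2*A)*u*(A - 2*(B*A)*I1) - 1/2*u = -(B*I2) := by
    intro A B u I1 I2 hA h
    field_simp
    linear_combination (-2)*B*h
  have := helper (Real.sqrt Real.pi) (Real.sqrt 2) |t|
    (∫ w in (0:ℝ)..|t|, Real.exp (-(2 * Real.pi * w ^ 2)))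
    (t * ∫ v in (0:ℝ)..t, Real.exp (-(2 * Real.pi * v ^ 2))) hA habs
  rw [hs2]
  rw [this]
  ring

/-- Paper Lemma 5.5(i): `B(x) - (1/2)|x₃|e^{-π(x₂²-x₃²)}` is `C²` on all of `ℝ²`. -/
theorem stmt2 :
    ContDiff ℝ 2 (fun x : ℝ × ℝ =>
      B x - (1/2) * |x.2| * Real.exp (-(Real.pi * (x.1 ^ 2 - x.2 ^ 2)))) := by
  have heq : (fun x : ℝ × ℝ =>
      B x - (1/2) * |x.2| * Real.exp (-(Real.pi * (x.1 ^ 2 - x.2 ^ 2))))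
      = (fun x : ℝ × ℝ =>
      -(1 / (2 * Real.sqrt 2 * Real.pi)) * Real.exp (-(Real.pi * (x.1 ^ 2 + x.2 ^ 2)))
      - Real.sqrt 2 * x.2 * (∫ v in (0:ℝ)..x.2, Real.exp (-(2 * Real.pi * v ^ 2)))
          * Real.exp (-(Real.pi * (x.1 ^ 2 - x.2 ^ 2)))) := by
    funext x
    have h := key_identity x.2
    simp only [B]
    linear_combination Real.exp (-(Real.pi * (x.1 ^ 2 - x.2 ^ 2))) * h
  rw [heq]
  have hF : ContDiff ℝ 2 (fun t : ℝ => ∫ v in (0:ℝ)..t, Real.exp (-(2 * Real.pi * v ^ 2))) := by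
    have hcont : Continuous (fun v : ℝ => Real.exp (-(2 * Real.pi * v ^ 2))) := by fun_prop
    have hd : deriv (fun t : ℝ => ∫ v in (0:ℝ)..t, Real.exp (-(2 * Real.pi * v ^ 2)))
        = fun t : ℝ => Real.exp (-(2 * Real.pi * t ^ 2)) := by
      funext t
      exact hcont.deriv_integral _ 0 t
    have hdiff : Differentiable ℝ
        (fun t : ℝ => ∫ v in (0:ℝ)..t, Real.exp (-(2 * Real.pi * v ^ 2))) :=
      fun t => ((hcont.integral_hasStrictDerivAt 0 t).hasDerivAt).differentiableAt
    rw [show ((2:WithTop ℕ∞)) = 1 + 1 from rfl, contDiff_succ_iff_deriv]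
    refine ⟨hdiff, by simp, ?_⟩
    rw [hd]
    fun_prop
  fun_prop
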